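/- The number of permutations of {1,...,n} that avoid the classical pattern 2-1-3 and avoid the barred pattern 2̄-31 (i.e., every descent π_i > π_{i+1} has some j < i with π_{i+1} < π_j < π_i) equals the (n-1)-st Motzkin number M_{n-1}. -/

import Mathlib

/-- Motzkin numbers: `M 0 = 1`, `M (n+1) = M n + ∑_{k=0}^{n-1} M k * M (n-1-k)`. -/
def motzkin : ℕ → ℕ
  | 0 => 1
  | n + 1 => motzkin n + ∑ k ∈ (Finset.range n).attach,
      motzkin k.1 * motzkin (n - 1 - k.1)
decreasing_by
  all_goals (try exact Nat.lt_succ_self n)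
  all_goals (have := Finset.mem_range.mp k.2; omega)

/-- `π` contains the classical pattern 2-1-3: indices `i < j < k` with `π j < π i < π k`. -/
def Contains213 {n : ℕ} (π : Equiv.Perm (Fin n)) : Prop :=
  ∃ i j k : Fin n, i < j ∧ j < k ∧ π j < π i ∧ π i < π k

/-- `π` avoids the barred pattern 2̄-31: every descent `π i > π (i+1)` has some `j < i`
with `π (i+1) < π j < π i`. -/
def AvoidsBarred231 {n : ℕ} (π : Equiv.Perm (Fin n)) : Prop :=
  ∀ i i' : Fin n, (i' : ℕ) = (i : ℕ) + 1 → π i' < π i →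
    ∃ j : Fin n, j < i ∧ π i' < π j ∧ π j < π i

def Valid {n : ℕ} (π : Equiv.Perm (Fin n)) : Prop :=
  ¬ Contains213 π ∧ AvoidsBarred231 π

noncomputable def f (n : ℕ) : ℕ := Nat.card {π : Equiv.Perm (Fin n) // Valid π}

section glue
variable (a b : ℕ) (A : Equiv.Perm (Fin a)) (B : Equiv.Perm (Fin b))

def glueF : Fin (a+b+1) → Fin (a+b+1) := fun i =>
  if h0 : i.val = 0 then ⟨b, by omega⟩
  else if hA : i.val ≤ a then
    ⟨b + 1 + (A ⟨i.val - 1, by omega⟩).val,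
      by have := (A ⟨i.val - 1, by omega⟩).isLt; omega⟩
  else ⟨(B ⟨i.val - a - 1, by have := i.isLt; omega⟩).val,
      by have := (B ⟨i.val - a - 1, by have := i.isLt; omega⟩).isLt; omega⟩

lemma glueF_inj : Function.Injective (glueF a b A B) := by
  intro i j hij
  unfold glueF at hij
  have hi := i.isLt; have hj := j.isLt
  by_cases h0i : i.val = 0 <;> by_cases h0j : j.val = 0
  · exact Fin.ext (by omega)
  · by_cases hAj : j.val ≤ a
    · simp only [h0i, h0j, hAj, dif_pos, dif_neg, not_false_iff] at hij
      have := congrArg Fin.val hij; simp at this; omega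
    · simp only [h0i, h0j, hAj, dif_pos, dif_neg, not_false_iff] at hij
      have := congrArg Fin.val hij; simp at this
      have := (B ⟨j.val - a - 1, by omega⟩).isLt; omega
  · by_cases hAi : i.val ≤ a
    · simp only [h0i, h0j, hAi, dif_pos, dif_neg, not_false_iff] at hij
      have := congrArg Fin.val hij; simp at this; omega
    · simp only [h0i, h0j, hAi, dif_pos, dif_neg, not_false_iff] at hij
      have := congrArg Fin.val hij; simp at this
      have := (B ⟨i.val - a - 1, by omega⟩).isLt; omega
  · by_cases hAi : i.val ≤ a <;> by_cases hAj : j.val ≤ a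
    · simp only [h0i, h0j, hAi, hAj, dif_pos, dif_neg, not_false_iff] at hij
      have h := congrArg Fin.val hij; simp at h
      have h2 : (A ⟨i.val - 1, by omega⟩) = (A ⟨j.val - 1, by omega⟩) := Fin.ext h
      have h3 := A.injective h2
      have := congrArg Fin.val h3; simp at this
      exact Fin.ext (by omega)
    · simp only [h0i, h0j, hAi, hAj, dif_neg, dif_pos, not_false_iff] at hij
      have := congrArg Fin.val hij; simp at this
      have := (B ⟨j.val - a - 1, by omega⟩).isLt; omega
    · simp only [h0i, h0j, hAi, hAj, dif_neg, dif_pos, not_false_iff] at hij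
      have := congrArg Fin.val hij; simp at this
      have := (B ⟨i.val - a - 1, by omega⟩).isLt; omega
    · simp only [h0i, h0j, hAi, hAj, dif_neg, not_false_iff] at hij
      have h := congrArg Fin.val hij; simp at h
      have h2 : (B ⟨i.val - a - 1, by omega⟩) = (B ⟨j.val - a - 1, by omega⟩) := Fin.ext h
      have h3 := B.injective h2
      have := congrArg Fin.val h3; simp at this
      exact Fin.ext (by omega)

noncomputable def glue : Equiv.Perm (Fin (a+b+1)) :=
  Equiv.ofBijective (glueF a b A B)
    (Finite.injective_iff_bijective.mp (glueF_inj a b A B))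

lemma glue_apply (i : Fin (a+b+1)) : glue a b A B i = glueF a b A B i := rfl

lemma glue_val_zero (i : Fin (a+b+1)) (h : i.val = 0) : (glue a b A B i).val = b := by
  rw [glue_apply]; unfold glueF; rw [dif_pos h]

lemma glue_val_mid (i : Fin (a+b+1)) (h0 : i.val ≠ 0) (hA : i.val ≤ a) :
    (glue a b A B i).val = b + 1 + (A ⟨i.val - 1, by omega⟩).val := by
  rw [glue_apply]; unfold glueF; rw [dif_neg h0, dif_pos hA]

lemma glue_val_hi (i : Fin (a+b+1)) (hA : a < i.val) :
    (glue a b A B i).val = (B ⟨i.val - a - 1, by have := i.isLt; omega⟩).val := by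
  rw [glue_apply]; unfold glueF; rw [dif_neg (by omega), dif_neg (by omega)]


lemma glue_val_mid' (x : Fin a) :
    (glue a b A B ⟨x.val + 1, by have := x.isLt; omega⟩).val = b + 1 + (A x).val := by
  have hx := x.isLt
  rw [glue_val_mid a b A B ⟨x.val + 1, by omega⟩ (by simp) (by simp)]
  congr 3

lemma glue_val_hi' (x : Fin b) :
    (glue a b A B ⟨a + 1 + x.val, by have := x.isLt; omega⟩).val = (B x).val := by
  have hx := x.isLt
  rw [glue_val_hi a b A B ⟨a + 1 + x.val, by omega⟩ (by simp; omega)]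
  congr 2
  exact Fin.ext (show a + 1 + x.val - a - 1 = x.val by omega)

attribute [irreducible] glue

end glue

section transfer
variable (a b : ℕ) (A : Equiv.Perm (Fin a)) (B : Equiv.Perm (Fin b))

lemma glue_contains_iff :
    Contains213 (glue a b A B) ↔ Contains213 A ∨ Contains213 B := by
  constructor
  · rintro ⟨i, j, k, hij, hjk, h1, h2⟩
    rw [Fin.lt_def] at hij hjk h1 h2
    have hk2 : 2 ≤ k.val := by omega
    by_cases hk : k.val ≤ a
    · -- k in mid block, hence j, and i must be mid too
      have hj0 : j.val ≠ 0 := by omega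
      have hja : j.val ≤ a := by omega
      rw [glue_val_mid a b A B k (by omega) hk] at h2
      rw [glue_val_mid a b A B j hj0 hja] at h1
      have hi0 : i.val ≠ 0 := by
        intro h
        rw [glue_val_zero a b A B i h] at h1
        omega
      have hia : i.val ≤ a := by omega
      rw [glue_val_mid a b A B i hi0 hia] at h1 h2
      left
      exact ⟨⟨i.val - 1, by omega⟩, ⟨j.val - 1, by omega⟩, ⟨k.val - 1, by omega⟩,
        by rw [Fin.lt_def]; simp; omega, by rw [Fin.lt_def]; simp; omega,
        by rw [Fin.lt_def]; omega, by rw [Fin.lt_def]; omega⟩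
    · -- k in hi block
      push_neg at hk
      rw [glue_val_hi a b A B k hk] at h2
      have hBk := (B ⟨k.val - a - 1, by have := k.isLt; omega⟩).isLt
      have hia : a < i.val := by
        rcases Nat.lt_or_ge a i.val with h | h
        · exact h
        · exfalso
          by_cases hi0 : i.val = 0
          · rw [glue_val_zero a b A B i hi0] at h2; omega
          · rw [glue_val_mid a b A B i hi0 h] at h2; omega
      have hja : a < j.val := by omega
      rw [glue_val_hi a b A B i hia] at h1 h2
      rw [glue_val_hi a b A B j hja] at h1
      right
      have hi := i.isLt; have hjlt := j.isLt; have hklt := k.isLt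
      exact ⟨⟨i.val - a - 1, by omega⟩, ⟨j.val - a - 1, by omega⟩, ⟨k.val - a - 1, by omega⟩,
        by rw [Fin.lt_def]; simp; omega, by rw [Fin.lt_def]; simp; omega,
        by rw [Fin.lt_def]; exact h1, by rw [Fin.lt_def]; exact h2⟩
  · rintro (⟨i, j, k, hij, hjk, h1, h2⟩ | ⟨i, j, k, hij, hjk, h1, h2⟩)
    · rw [Fin.lt_def] at hij hjk h1 h2
      have hi := i.isLt; have hj := j.isLt; have hk := k.isLt
      have key : ∀ x : Fin a, ((glue a b A B ⟨x.val + 1, by omega⟩).val : ℕ)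
          = b + 1 + (A x).val := by
        intro x
        have hx := x.isLt
        rw [glue_val_mid a b A B ⟨x.val + 1, by omega⟩ (by simp) (by simp)]
        congr 3
      refine ⟨⟨i.val + 1, by omega⟩, ⟨j.val + 1, by omega⟩, ⟨k.val + 1, by omega⟩,
        by rw [Fin.lt_def]; simp; omega, by rw [Fin.lt_def]; simp; omega, ?_, ?_⟩
      · rw [Fin.lt_def, key i, key j]; omega
      · rw [Fin.lt_def, key i, key k]; omega
    · rw [Fin.lt_def] at hij hjk h1 h2
      have hi := i.isLt; have hj := j.isLt; have hk := k.isLt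
      have key : ∀ x : Fin b, ((glue a b A B ⟨a + 1 + x.val, by omega⟩).val : ℕ)
          = (B x).val := by
        intro x
        have hx := x.isLt
        rw [glue_val_hi a b A B ⟨a + 1 + x.val, by omega⟩ (by simp; omega)]
        congr 2
        exact Fin.ext (show a + 1 + x.val - a - 1 = x.val by omega)
      refine ⟨⟨a + 1 + i.val, by omega⟩, ⟨a + 1 + j.val, by omega⟩, ⟨a + 1 + k.val, by omega⟩,
        by rw [Fin.lt_def]; simp; omega, by rw [Fin.lt_def]; simp; omega, ?_, ?_⟩
      · rw [Fin.lt_def, key i, key j]; omega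
      · rw [Fin.lt_def, key i, key k]; omega
end transfer

section barred
variable (a b : ℕ) (A : Equiv.Perm (Fin a)) (B : Equiv.Perm (Fin b))

lemma glue_barred_iff (ha : 1 ≤ a) :
    AvoidsBarred231 (glue a b A B) ↔ AvoidsBarred231 A ∧ AvoidsBarred231 B := by
  constructor
  · intro H
    constructor
    · intro iA i'A hsucc hdesc
      rw [Fin.lt_def] at hdesc
      have hiA := iA.isLt; have hi'A := i'A.isLt
      obtain ⟨j, hj, hj1, hj2⟩ := H ⟨iA.val + 1, by omega⟩ ⟨i'A.val + 1, by omega⟩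
        (by simp [hsucc]) (by
          rw [Fin.lt_def, glue_val_mid' a b A B i'A, glue_val_mid' a b A B iA]; omega)
      rw [Fin.lt_def] at hj hj1 hj2
      rw [glue_val_mid' a b A B i'A] at hj1
      rw [glue_val_mid' a b A B iA] at hj2
      have hj0 : j.val ≠ 0 := by
        intro h; rw [glue_val_zero a b A B j h] at hj1; omega
      have hja : j.val ≤ a := by
        by_contra h
        rw [glue_val_hi a b A B j (by omega)] at hj1
        have := (B ⟨j.val - a - 1, by have := j.isLt; omega⟩).isLt; omega
      rw [glue_val_mid a b A B j hj0 hja] at hj1 hj2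
      exact ⟨⟨j.val - 1, by omega⟩, by rw [Fin.lt_def]; simp at hj ⊢; omega,
        by rw [Fin.lt_def]; omega, by rw [Fin.lt_def]; omega⟩
    · intro iB i'B hsucc hdesc
      rw [Fin.lt_def] at hdesc
      have hiB := iB.isLt; have hi'B := i'B.isLt
      obtain ⟨j, hj, hj1, hj2⟩ := H ⟨a + 1 + iB.val, by omega⟩ ⟨a + 1 + i'B.val, by omega⟩
        (by simp [hsucc]; omega) (by
          rw [Fin.lt_def, glue_val_hi' a b A B i'B, glue_val_hi' a b A B iB]; omega)
      rw [Fin.lt_def] at hj hj1 hj2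
      rw [glue_val_hi' a b A B i'B] at hj1
      rw [glue_val_hi' a b A B iB] at hj2
      have hBlt := (B iB).isLt
      have hj0 : j.val ≠ 0 := by
        intro h; rw [glue_val_zero a b A B j h] at hj2; omega
      have hja : a < j.val := by
        by_contra h
        rw [glue_val_mid a b A B j hj0 (by omega)] at hj2; omega
      rw [glue_val_hi a b A B j hja] at hj1 hj2
      exact ⟨⟨j.val - a - 1, by have := j.isLt; omega⟩,
        by rw [Fin.lt_def]; simp at hj ⊢; omega,
        by rw [Fin.lt_def]; exact hj1, by rw [Fin.lt_def]; exact hj2⟩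
  · rintro ⟨HA, HB⟩ i i' hsucc hdesc
    rw [Fin.lt_def] at hdesc
    have hi := i.isLt; have hi' := i'.isLt
    by_cases hi0 : i.val = 0
    · exfalso
      rw [glue_val_zero a b A B i hi0] at hdesc
      rw [glue_val_mid a b A B i' (by omega) (by omega)] at hdesc
      omega
    · by_cases hia : i.val ≤ a
      · by_cases hi'a : i'.val ≤ a
        · -- both in mid block
          rw [glue_val_mid a b A B i hi0 hia] at hdesc
          rw [glue_val_mid a b A B i' (by omega) hi'a] at hdesc
          obtain ⟨jA, hj, hj1, hj2⟩ := HA ⟨i.val - 1, by omega⟩ ⟨i'.val - 1, by omega⟩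
            (by simp; omega) (by rw [Fin.lt_def]; omega)
          rw [Fin.lt_def] at hj hj1 hj2
          have hjA := jA.isLt
          refine ⟨⟨jA.val + 1, by omega⟩, by rw [Fin.lt_def]; simp at hj ⊢; omega, ?_, ?_⟩
          · rw [Fin.lt_def, glue_val_mid' a b A B jA,
              glue_val_mid a b A B i' (by omega) hi'a]; omega
          · rw [Fin.lt_def, glue_val_mid' a b A B jA,
              glue_val_mid a b A B i hi0 hia]; omega
        · -- boundary: i = a, i' = a + 1
          refine ⟨⟨0, by omega⟩, by rw [Fin.lt_def]; show 0 < i.val; omega, ?_, ?_⟩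
          · rw [Fin.lt_def, glue_val_zero a b A B ⟨0, by omega⟩ rfl, glue_val_hi a b A B i' (by omega)]
            exact (B _).isLt
          · rw [Fin.lt_def, glue_val_zero a b A B ⟨0, by omega⟩ rfl,
              glue_val_mid a b A B i hi0 hia]; omega
      · -- both in hi block
        push_neg at hia
        rw [glue_val_hi a b A B i hia] at hdesc
        rw [glue_val_hi a b A B i' (by omega)] at hdesc
        obtain ⟨jB, hj, hj1, hj2⟩ := HB ⟨i.val - a - 1, by omega⟩ ⟨i'.val - a - 1, by omega⟩
          (by simp; omega) (by rw [Fin.lt_def]; exact hdesc)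
        rw [Fin.lt_def] at hj hj1 hj2
        have hjB := jB.isLt
        refine ⟨⟨a + 1 + jB.val, by omega⟩, by rw [Fin.lt_def]; simp at hj ⊢; omega, ?_, ?_⟩
        · rw [Fin.lt_def, glue_val_hi' a b A B jB, glue_val_hi a b A B i' (by omega)]
          exact hj1
        · rw [Fin.lt_def, glue_val_hi' a b A B jB, glue_val_hi a b A B i hia]
          exact hj2

lemma glue_valid_iff (ha : 1 ≤ a) :
    Valid (glue a b A B) ↔ Valid A ∧ Valid B := by
  unfold Valid
  rw [glue_contains_iff, glue_barred_iff a b A B ha]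
  tauto

end barred

section extract
variable {n : ℕ} (π : Equiv.Perm (Fin n))

lemma valid_first_lt (hn : 2 ≤ n) (hv : Valid π) (z o : Fin n) (hz0 : z.val = 0)
    (ho : o.val = 1) : (π z).val < n - 1 := by
  have h1 := (π o).isLt
  rcases Nat.lt_or_ge (π o).val (π z).val with h | h
  · obtain ⟨j, hj, _, _⟩ := hv.2 z o (by omega) (by rw [Fin.lt_def]; exact h)
    rw [Fin.lt_def] at hj; omega
  · have hne : (π z).val ≠ (π o).val := by
      intro he
      have := congrArg Fin.val (π.injective (Fin.ext he))
      omega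
    omega

lemma valid_block (hn : 2 ≤ n) (hv : Valid π) (z : Fin n) (hz0 : z.val = 0)
    (p : Fin n) (hp : 1 ≤ p.val) :
    p.val ≤ n - 1 - (π z).val ↔ (π z).val < (π p).val := by
  classical
  set b := (π z).val with hbdef
  have hne : ∀ q : Fin n, q.val ≠ 0 → (π q).val ≠ b := by
    intro q h he
    have := congrArg Fin.val (π.injective (Fin.ext (he : (π q).val = (π z).val)))
    omega
  have key : ∀ p q : Fin n, 0 < p.val → p.val < q.val → (π p).val < b → b < (π q).val → False := by
    intro p q hp' hpq h1 h2
    exact hv.1 ⟨z, p, q, by rw [Fin.lt_def]; omega, by rw [Fin.lt_def]; exact hpq,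
      by rw [Fin.lt_def]; exact h1, by rw [Fin.lt_def]; exact h2⟩
  set L : Finset (Fin n) := Finset.univ.filter (fun q => π z < π q) with hL
  have hmem : ∀ q, q ∈ L ↔ b < (π q).val := by
    intro q
    rw [hL, Finset.mem_filter]
    simp only [Finset.mem_univ, true_and]
    exact Fin.lt_def
  have hcard : L.card = n - 1 - b := by
    have himg : L = (Finset.Ioi (π z)).image π.symm := by
      ext q
      simp only [hL, Finset.mem_filter, Finset.mem_univ, true_and, Finset.mem_image,
        Finset.mem_Ioi]
      constructor
      · intro h; exact ⟨π q, h, π.symm_apply_apply q⟩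
      · rintro ⟨v, hv', rfl⟩; rwa [π.apply_symm_apply]
    rw [himg, Finset.card_image_of_injective _ π.symm.injective, Fin.card_Ioi]
  have hzL : z ∉ L := by simp [hL]
  have hdown : ∀ q r : Fin n, 1 ≤ q.val → q.val < r.val → r ∈ L → q ∈ L := by
    intro q r hq hqr hr
    rw [hmem] at hr ⊢
    by_contra h
    push_neg at h
    have := hne q (by omega)
    exact key q r (by omega) hqr (by omega) hr
  constructor
  · intro hpa
    by_contra hcon
    push_neg at hcon
    have hnep := hne p (by omega)
    have hsub : L ⊆ Finset.Iio p := by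
      intro r hr
      rw [Finset.mem_Iio, Fin.lt_def]
      rw [hmem] at hr
      by_contra hge
      push_neg at hge
      have : p.val ≠ r.val := by
        intro he
        have : p = r := Fin.ext he
        subst this; omega
      exact key p r (by omega) (by omega) (by omega) hr
    have hss : L ⊂ Finset.Iio p :=
      ⟨hsub, fun hsub2 => hzL (hsub2 (Finset.mem_Iio.mpr (by rw [Fin.lt_def]; omega)))⟩
    have := Finset.card_lt_card hss
    rw [hcard, Fin.card_Iio] at this
    omega
  · intro hpL
    have hsub : Finset.Ioc z p ⊆ L := by
      intro q hq
      rw [Finset.mem_Ioc] at hq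
      obtain ⟨h1, h2⟩ := hq
      rw [Fin.lt_def] at h1; rw [Fin.le_def] at h2
      rcases Nat.lt_or_ge q.val p.val with h | h
      · exact hdown q p (by omega) h (by rw [hmem]; exact hpL)
      · have : q = p := Fin.ext (by omega)
        rw [this, hmem]; exact hpL
    have hIoc := Finset.card_le_card hsub
    rw [Fin.card_Ioc, hcard] at hIoc
    omega

end extract

section main

lemma permCongr_glue_val {k a b : ℕ} (h : a + b + 1 = k) (A : Equiv.Perm (Fin a))
    (B : Equiv.Perm (Fin b)) (i : Fin k) :
    (((finCongr h).permCongr (glue a b A B)) i).val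
      = (glue a b A B ⟨i.val, by omega⟩).val := by
  rw [Equiv.permCongr_apply]
  have e1 : (finCongr h).symm i = ⟨i.val, by have := i.isLt; omega⟩ := by
    apply Fin.ext; simp
  rw [e1]
  simp

lemma valid_congr {m k : ℕ} (h : m = k) (π : Equiv.Perm (Fin m)) :
    Valid ((finCongr h).permCongr π) ↔ Valid π := by
  subst h
  have : (finCongr rfl).permCongr π = π := by
    apply Equiv.ext; intro x; simp
  rw [this]

/-- pattern of `π` on the large values -/
def FA {n : ℕ} (π : Equiv.Perm (Fin n)) (b : ℕ) (hb : b < n - 1) :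
    Fin (n-1-b) → Fin (n-1-b) := fun x =>
  ⟨(π ⟨x.val + 1, by have := x.isLt; omega⟩).val - (b+1), by
    have := (π ⟨x.val + 1, by have := x.isLt; omega⟩).isLt; omega⟩

/-- pattern of `π` on the small values -/
def FB {n : ℕ} (π : Equiv.Perm (Fin n)) (b : ℕ) (hb : b < n - 1) :
    Fin b → Fin b := fun x =>
  ⟨(π ⟨(n-1-b) + 1 + x.val, by have := x.isLt; omega⟩).val % b,
    Nat.mod_lt _ (by have := x.isLt; omega)⟩

lemma decomp {n : ℕ} (hn : 2 ≤ n) (π : Equiv.Perm (Fin n)) (hv : Valid π) :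
    ∃ (c : Fin (n-1)) (A : Equiv.Perm (Fin (n-1-c.val))) (B : Equiv.Perm (Fin c.val)),
      Valid A ∧ Valid B ∧
      ∀ h : (n-1-c.val) + c.val + 1 = n, (finCongr h).permCongr (glue _ _ A B) = π := by
  obtain ⟨z, hz0⟩ : ∃ z : Fin n, z.val = 0 := ⟨⟨0, by omega⟩, rfl⟩
  obtain ⟨b, hbdef⟩ : ∃ b, b = (π z).val := ⟨_, rfl⟩
  have hb : b < n - 1 := by
    rw [hbdef]; exact valid_first_lt π hn hv z ⟨1, by omega⟩ hz0 rfl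
  have block : ∀ p : Fin n, 1 ≤ p.val → (p.val ≤ (n-1-b) ↔ b < (π p).val) := by
    intro p hp
    rw [hbdef]
    exact valid_block π hn hv z hz0 p hp
  have hvne : ∀ q : Fin n, q.val ≠ 0 → (π q).val ≠ b := by
    intro q h he
    have := congrArg Fin.val (π.injective (Fin.ext ((hbdef ▸ he) : (π q).val = (π z).val)))
    omega
  have hA1 : ∀ x : Fin (n-1-b), b < (π ⟨x.val + 1, by have := x.isLt; omega⟩).val := by
    intro x
    have hx := x.isLt
    exact (block ⟨x.val + 1, by omega⟩ (by simp)).mp (by simp)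
  have hB1 : ∀ x : Fin b, (π ⟨(n-1-b) + 1 + x.val, by have := x.isLt; omega⟩).val < b := by
    intro x
    have hx := x.isLt
    have hp1 : (1:ℕ) ≤ (n-1-b) + 1 + x.val := by omega
    have h2 : ¬ (b < (π ⟨(n-1-b) + 1 + x.val, by omega⟩).val) := by
      intro h
      have := (block ⟨(n-1-b) + 1 + x.val, by omega⟩ hp1).mpr h
      simp at this; omega
    have h3 := hvne ⟨(n-1-b) + 1 + x.val, by omega⟩ (by simp)
    omega
  have hFAval : ∀ x : Fin (n-1-b), (FA π b hb x).val
      = (π ⟨x.val + 1, by have := x.isLt; omega⟩).val - (b+1) := fun _ => rfl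
  have hFBval : ∀ x : Fin b, (FB π b hb x).val
      = (π ⟨(n-1-b) + 1 + x.val, by have := x.isLt; omega⟩).val := by
    intro x
    show (π ⟨(n-1-b) + 1 + x.val, _⟩).val % b = _
    rw [Nat.mod_eq_of_lt (hB1 x)]
  have hFAinj : Function.Injective (FA π b hb) := by
    intro x y hxy
    have h1 := hA1 x; have h2 := hA1 y
    have := congrArg Fin.val hxy
    rw [hFAval, hFAval] at this
    have h3 : (π ⟨x.val + 1, by have := x.isLt; omega⟩).val
        = (π ⟨y.val + 1, by have := y.isLt; omega⟩).val := by omega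
    have := congrArg Fin.val (π.injective (Fin.ext h3))
    simp at this
    exact Fin.ext this
  have hFBinj : Function.Injective (FB π b hb) := by
    intro x y hxy
    have := congrArg Fin.val hxy
    rw [hFBval, hFBval] at this
    have := congrArg Fin.val (π.injective (Fin.ext this))
    simp at this
    exact Fin.ext (by omega)
  set PA : Equiv.Perm (Fin (n-1-b)) :=
    Equiv.ofBijective _ (Finite.injective_iff_bijective.mp hFAinj) with hPA
  set PB : Equiv.Perm (Fin b) :=
    Equiv.ofBijective _ (Finite.injective_iff_bijective.mp hFBinj) with hPB
  have hPAval : ∀ x : Fin (n-1-b), (PA x).val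
      = (π ⟨x.val + 1, by have := x.isLt; omega⟩).val - (b+1) := fun x => hFAval x
  have hPBval : ∀ x : Fin b, (PB x).val
      = (π ⟨(n-1-b) + 1 + x.val, by have := x.isLt; omega⟩).val := fun x => hFBval x
  have hsum : (n-1-b) + b + 1 = n := by omega
  have heq : (finCongr hsum).permCongr (glue (n-1-b) b PA PB) = π := by
    apply Equiv.ext
    intro i
    apply Fin.ext
    rw [permCongr_glue_val hsum PA PB i]
    have hi := i.isLt
    have hilt : i.val < (n-1-b) + b + 1 := by omega
    by_cases h0 : i.val = 0
    · rw [glue_val_zero (n-1-b) b PA PB ⟨i.val, hilt⟩ h0]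
      have : i = z := Fin.ext (show i.val = z.val by omega)
      rw [this]; exact hbdef
    · by_cases hia : i.val ≤ (n-1-b)
      · rw [glue_val_mid (n-1-b) b PA PB ⟨i.val, hilt⟩ h0 hia]
        rw [hPAval ⟨i.val - 1, by omega⟩]
        have e2 : (⟨(i.val - 1) + 1, by omega⟩ : Fin n) = i :=
          Fin.ext (show (i.val - 1) + 1 = i.val by omega)
        rw [e2]
        have hgt : b < (π i).val := (block i (by omega)).mp (by omega)
        omega
      · rw [glue_val_hi (n-1-b) b PA PB ⟨i.val, hilt⟩ (show (n-1-b) < i.val by omega)]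
        rw [hPBval ⟨i.val - (n-1-b) - 1, by omega⟩]
        congr 2
        exact Fin.ext (show (n-1-b) + 1 + (i.val - (n-1-b) - 1) = i.val by omega)
  have hvg : Valid (glue (n-1-b) b PA PB) := by
    rw [← valid_congr hsum (glue (n-1-b) b PA PB), heq]; exact hv
  obtain ⟨hvA, hvB⟩ := (glue_valid_iff (n-1-b) b PA PB (by omega)).mp hvg
  refine ⟨⟨b, hb⟩, PA, PB, hvA, hvB, ?_⟩
  intro h
  exact heq

end main

section count

def SigT (n : ℕ) := Σ c : Fin (n-1),
  {A : Equiv.Perm (Fin (n-1-c.val)) // Valid A} × {B : Equiv.Perm (Fin c.val) // Valid B}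

lemma hcsum {n : ℕ} (hn : 2 ≤ n) (c : Fin (n-1)) : (n-1-c.val) + c.val + 1 = n := by
  have := c.isLt; omega

noncomputable def G (n : ℕ) (hn : 2 ≤ n) : SigT n → {π : Equiv.Perm (Fin n) // Valid π} :=
  fun x => ⟨(finCongr (hcsum hn x.1)).permCongr
      (glue (n-1-x.1.val) x.1.val x.2.1.val x.2.2.val),
    by
      rw [valid_congr]
      refine (glue_valid_iff _ _ _ _ ?_).mpr ⟨x.2.1.2, x.2.2.2⟩
      have := x.1.isLt; omega⟩

lemma G_inj (n : ℕ) (hn : 2 ≤ n) : Function.Injective (G n hn) := by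
  rintro ⟨c, ⟨A, hA⟩, ⟨B, hB⟩⟩ ⟨c', ⟨A', hA'⟩, ⟨B', hB'⟩⟩ hxy
  have hval : ∀ (m : ℕ) (hm : m < n),
      (glue (n-1-c.val) c.val A B ⟨m, by have := c.isLt; omega⟩).val
        = (glue (n-1-c'.val) c'.val A' B' ⟨m, by have := c'.isLt; omega⟩).val := by
    intro m hm
    have h2 := congrArg
      (fun ρ : {π : Equiv.Perm (Fin n) // Valid π} => ((ρ.val ⟨m, hm⟩ : Fin n) : ℕ)) hxy
    simp only [G] at h2
    rw [permCongr_glue_val, permCongr_glue_val] at h2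
    exact h2
  have hcc : c = c' := by
    have h0 := hval 0 (by omega)
    rw [glue_val_zero _ _ A B _ rfl, glue_val_zero _ _ A' B' _ rfl] at h0
    exact Fin.ext h0
  subst hcc
  have hAA : A = A' := by
    apply Equiv.ext
    intro xA
    have hxA := xA.isLt
    have hc := c.isLt
    have h1 := hval (xA.val + 1) (by omega)
    rw [glue_val_mid' _ _ A B xA, glue_val_mid' _ _ A' B' xA] at h1
    exact Fin.ext (by omega)
  have hBB : B = B' := by
    apply Equiv.ext
    intro xB
    have hxB := xB.isLt
    have hc := c.isLt
    have h1 := hval ((n-1-c.val) + 1 + xB.val) (by omega)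
    rw [glue_val_hi' _ _ A B xB, glue_val_hi' _ _ A' B' xB] at h1
    exact Fin.ext h1
  subst hAA; subst hBB
  rfl

lemma G_surj (n : ℕ) (hn : 2 ≤ n) : Function.Surjective (G n hn) := by
  rintro ⟨π, hv⟩
  obtain ⟨c, A, B, hA, hB, hglue⟩ := decomp hn π hv
  exact ⟨⟨c, ⟨A, hA⟩, ⟨B, hB⟩⟩, Subtype.ext (hglue _)⟩

lemma nat_card_sigma {m : ℕ} (α : Fin m → Type*) [∀ i, Finite (α i)] :
    Nat.card (Σ i, α i) = ∑ i, Nat.card (α i) := by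
  letI : ∀ i, Fintype (α i) := fun i => Fintype.ofFinite _
  simp [Nat.card_eq_fintype_card]

lemma f_rec (n : ℕ) (hn : 2 ≤ n) : f n = ∑ c ∈ Finset.range (n-1), f (n-1-c) * f c := by
  have e : SigT n ≃ {π : Equiv.Perm (Fin n) // Valid π} :=
    Equiv.ofBijective (G n hn) ⟨G_inj n hn, G_surj n hn⟩
  have h1 : f n = Nat.card (SigT n) := (Nat.card_congr e).symm
  rw [h1]
  have h2 : Nat.card (SigT n) = ∑ c : Fin (n-1), f (n-1-c.val) * f c.val := by
    rw [show Nat.card (SigT n) = Nat.card (Σ c : Fin (n-1),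
      ({A : Equiv.Perm (Fin (n-1-c.val)) // Valid A} ×
       {B : Equiv.Perm (Fin c.val) // Valid B})) from rfl]
    rw [nat_card_sigma]
    exact Finset.sum_congr rfl (fun c _ => by rw [Nat.card_prod]; rfl)
  rw [h2]
  exact Fin.sum_univ_eq_sum_range (fun k => f (n-1-k) * f k) (n-1)

lemma f_zero : f 0 = 1 := by
  have hall : ∀ π : Equiv.Perm (Fin 0), Valid π := by
    intro π
    constructor
    · rintro ⟨i, _⟩; exact i.elim0
    · intro i; exact i.elim0
  rw [f, Nat.card_congr (Equiv.subtypeUnivEquiv hall)]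
  simp [Nat.card_eq_fintype_card]

lemma f_one : f 1 = 1 := by
  have hall : ∀ π : Equiv.Perm (Fin 1), Valid π := by
    intro π
    constructor
    · rintro ⟨i, j, k, hij, hjk, _⟩
      rw [Fin.lt_def] at hij hjk
      have := i.isLt; have := j.isLt; omega
    · intro i i' h _
      have := i.isLt; have := i'.isLt; omega
  rw [f, Nat.card_congr (Equiv.subtypeUnivEquiv hall)]
  simp [Nat.card_eq_fintype_card]

end count


lemma motzkin_succ (m : ℕ) :
    motzkin (m+1) = motzkin m + ∑ k ∈ Finset.range m, motzkin k * motzkin (m-1-k) := by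
  rw [motzkin]
  congr 1
  exact Finset.sum_attach (Finset.range m) (fun k => motzkin k * motzkin (m-1-k))

lemma main_count : ∀ n, 1 ≤ n → f n = motzkin (n-1) := by
  intro n
  induction n using Nat.strong_induction_on with
  | _ n ih =>
    intro hn
    rcases Nat.lt_or_ge n 2 with h2 | h2
    · have hone : n = 1 := by omega
      subst hone
      rw [f_one]
      simp [motzkin]
    · rw [f_rec n h2]
      have h3 : n - 1 = (n-2) + 1 := by omega
      rw [h3, Finset.sum_range_succ', motzkin_succ]
      have hstep : ∀ k ∈ Finset.range (n-2),
          f ((n-2)+1-(k+1)) * f (k+1) = motzkin k * motzkin ((n-2)-1-k) := by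
        intro k hk
        have hk' := Finset.mem_range.mp hk
        have e1 : (n-2)+1-(k+1) = n-2-k := by omega
        rw [e1, ih (n-2-k) (by omega) (by omega), ih (k+1) (by omega) (by omega), mul_comm]
        rw [show (n-2-k) - 1 = (n-2)-1-k from by omega, show (k+1)-1 = k from rfl]
      rw [Finset.sum_congr rfl hstep]
      rw [show (n-2)+1-0 = n-1 from by omega, ih (n-1) (by omega) (by omega), f_zero,
        mul_one, show n-1-1 = n-2 from by omega, add_comm]

theorem stmt0 (n : ℕ) (hn : 1 ≤ n) :
    Nat.card {π : Equiv.Perm (Fin n) // ¬ Contains213 π ∧ AvoidsBarred231 π}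
      = motzkin (n - 1) := by
  exact main_count n hn
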